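/- Let A be a nonzero m×m real symmetric positive semidefinite matrix with Moore–Penrose inverse A†, and let λ_max denote its largest eigenvalue. If the real scalar α satisfies 0 < α < 2/λ_max², then the spectral norm satisfies ‖A A† − α A²‖ < 1; i.e. any sufficiently small positive α makes the Newton–Raphson initialization A₀ = α A satisfy the contraction condition ‖A A† − A A₀‖ < 1. -/

import Mathlib

open Matrix

/-- The spectral norm (ℓ²-operator norm) of a real square matrix. -/
noncomputable def specNorm {m : ℕ} (M : Matrix (Fin m) (Fin m) ℝ) : ℝ :=
  ‖Matrix.toEuclideanCLM (𝕜 := ℝ) M‖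

/-- `Ad` is the Moore–Penrose inverse of `A`: the Penrose equations
`A Ad A = A`, `Ad A Ad = Ad`, `(A Ad)ᵀ = A Ad`, `(Ad A)ᵀ = Ad A`. -/
def IsMoorePenroseInv {m n : ℕ} (A : Matrix (Fin m) (Fin n) ℝ)
    (Ad : Matrix (Fin n) (Fin m) ℝ) : Prop :=
  A * Ad * A = A ∧ Ad * A * Ad = Ad ∧ (A * Ad)ᵀ = A * Ad ∧ (Ad * A)ᵀ = Ad * A

open scoped Matrix.Norms.L2Operator

/-- Square Moore–Penrose inverses are unique. -/
lemma mp_unique_aux {m : ℕ} {A X Y : Matrix (Fin m) (Fin m) ℝ}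
    (hX : IsMoorePenroseInv A X) (hY : IsMoorePenroseInv A Y) : X = Y := by
  obtain ⟨hX1, hX2, hX3, hX4⟩ := hX
  obtain ⟨hY1, hY2, hY3, hY4⟩ := hY
  have hXA : Xᵀ * Aᵀ = A * X := by rw [← transpose_mul, hX3]
  have hYA : Yᵀ * Aᵀ = A * Y := by rw [← transpose_mul, hY3]
  have hXA' : Aᵀ * Xᵀ = X * A := by rw [← transpose_mul, hX4]
  have hAY' : Aᵀ * Yᵀ = Y * A := by rw [← transpose_mul, hY4]
  have e1 : X = X * A * Y := by
    calc X = X * (A * X) := by rw [← mul_assoc, hX2]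
      _ = X * (Xᵀ * Aᵀ) := by rw [hXA]
      _ = X * (Xᵀ * (A * Y * A)ᵀ) := by rw [hY1]
      _ = X * (Xᵀ * (Aᵀ * (Yᵀ * Aᵀ))) := by simp only [transpose_mul, mul_assoc]
      _ = X * (Xᵀ * (Aᵀ * (A * Y))) := by rw [hYA]
      _ = X * (Xᵀ * Aᵀ) * (A * Y) := by simp only [mul_assoc]
      _ = X * (A * X) * (A * Y) := by rw [hXA]
      _ = X * A * Y := by rw [← mul_assoc X A X, hX2, ← mul_assoc]
  have e2 : Y = X * A * Y := by
    calc Y = Y * A * Y := by rw [hY2]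
      _ = (Aᵀ * Yᵀ) * Y := by rw [hAY']
      _ = ((A * X * A)ᵀ * Yᵀ) * Y := by rw [hX1]
      _ = Aᵀ * (Xᵀ * ((Aᵀ * Yᵀ) * Y)) := by simp only [transpose_mul, mul_assoc]
      _ = Aᵀ * (Xᵀ * ((Y * A) * Y)) := by rw [hAY']
      _ = Aᵀ * (Xᵀ * Y) := by rw [hY2]
      _ = (Aᵀ * Xᵀ) * Y := by rw [mul_assoc]
      _ = X * A * Y := by rw [hXA']
  rw [e1, ← e2]

/-- The ℓ²-operator norm of a real diagonal matrix is bounded by a bound on the entries. -/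
lemma diag_l2_norm_le_aux {m : ℕ} (d : Fin m → ℝ) (c : ℝ) (hc : 0 ≤ c) (h : ∀ i, |d i| ≤ c) :
    ‖(Matrix.diagonal d : Matrix (Fin m) (Fin m) ℝ)‖ ≤ c := by
  rw [Matrix.l2_opNorm_def]
  refine ContinuousLinearMap.opNorm_le_bound _ hc (fun x => ?_)
  have happ : ((Matrix.toEuclideanLin.trans LinearMap.toContinuousLinearMap)
      (Matrix.diagonal d)) x = Matrix.toEuclideanLin (Matrix.diagonal d) x := rfl
  rw [happ, Matrix.toEuclideanLin_apply]
  have h1 : ‖WithLp.toLp 2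
      (Matrix.diagonal d *ᵥ x.ofLp)‖
      = Real.sqrt (∑ i, (d i * x i) ^ 2) := by
    rw [EuclideanSpace.norm_eq]
    congr 1
    refine Finset.sum_congr rfl fun i _ => ?_
    simp [Matrix.mulVec_diagonal, mul_pow, sq_abs]
  rw [h1]
  have h2 : ‖x‖ = Real.sqrt (∑ i, (x i) ^ 2) := by
    rw [EuclideanSpace.norm_eq]
    congr 1
    exact Finset.sum_congr rfl fun i _ => by rw [Real.norm_eq_abs, sq_abs]
  rw [h2, ← Real.sqrt_sq hc, ← Real.sqrt_mul (sq_nonneg c)]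
  apply Real.sqrt_le_sqrt
  rw [Finset.mul_sum]
  refine Finset.sum_le_sum fun i _ => ?_
  have := h i
  have h3 : (d i) ^ 2 ≤ c ^ 2 := by
    nlinarith [abs_nonneg (d i), sq_abs (d i), neg_abs_le (d i), le_abs_self (d i)]
  nlinarith [sq_nonneg (x i), sq_nonneg (d i)]

/-- If `A` is a nonzero real symmetric positive semidefinite matrix with
Moore–Penrose inverse `Ad` and largest eigenvalue `λmax`, and `0 < α < 2 / λmax²`, then
`‖A Ad - α A²‖ < 1` in spectral norm, i.e. the initialization `A₀ = α A` satisfies the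
contraction condition. -/
theorem newton_raphson_small_alpha_contraction {m : ℕ}
    (A Ad : Matrix (Fin m) (Fin m) ℝ)
    (hA : A.PosSemidef) (hA0 : A ≠ 0)
    (hMP : IsMoorePenroseInv A Ad)
    (lmax : ℝ) (hlmax : lmax = ⨆ i, hA.1.eigenvalues i)
    (α : ℝ) (hα0 : 0 < α) (hα : α < 2 / lmax ^ 2) :
    specNorm (A * Ad - α • (A * A)) < 1 := by
  have hm : 0 < m := by
    rcases Nat.eq_zero_or_pos m with h | h
    · exfalso; subst h; exact hA0 (Subsingleton.elim A 0)
    · exact h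
  haveI : NeZero m := ⟨hm.ne'⟩
  set U : Matrix (Fin m) (Fin m) ℝ := (hA.1.eigenvectorUnitary : Matrix (Fin m) (Fin m) ℝ)
    with hU
  set ev : Fin m → ℝ := hA.1.eigenvalues with hev
  have hUU : star U * U = 1 := Unitary.coe_star_mul_self hA.1.eigenvectorUnitary
  have hspec : A = U * diagonal ev * star U := by simpa using hA.1.spectral_theorem
  have key : ∀ (v w : Fin m → ℝ),
      (U * diagonal v * star U) * (U * diagonal w * star U)
        = U * diagonal (fun i => v i * w i) * star U := by
    intro v w
    calc (U * diagonal v * star U) * (U * diagonal w * star U)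
        = U * diagonal v * (star U * U) * (diagonal w * star U) := by
          simp only [mul_assoc]
      _ = U * (diagonal v * diagonal w) * star U := by
          rw [hUU, mul_one]; simp only [mul_assoc]
      _ = U * diagonal (fun i => v i * w i) * star U := by
          rw [diagonal_mul_diagonal]
  have sym : ∀ (v : Fin m → ℝ), (U * diagonal v * star U)ᵀ = U * diagonal v * star U := by
    intro v
    have hsv : star v = v := by funext i; simp
    rw [← conjTranspose_eq_transpose_of_trivial]
    simp only [conjTranspose_mul, star_eq_conjTranspose, conjTranspose_conjTranspose,
      diagonal_conjTranspose, hsv, mul_assoc]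
  -- eigenvalue facts
  have hev0 : ∀ i, 0 ≤ ev i := fun i => hA.eigenvalues_nonneg i
  have hbdd : BddAbove (Set.range ev) := Set.Finite.bddAbove (Set.finite_range ev)
  have hle : ∀ i, ev i ≤ lmax := fun i => hlmax ▸ le_ciSup hbdd i
  have hlmax0 : 0 < lmax := by
    by_contra hcon
    push_neg at hcon
    have hev_eq : ev = 0 := funext fun i => le_antisymm ((hle i).trans hcon) (hev0 i)
    apply hA0
    rw [hspec, hev_eq, show diagonal (0 : Fin m → ℝ) = 0 from diagonal_zero, mul_zero, zero_mul]
  -- the candidate Moore–Penrose inverse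
  set g : Fin m → ℝ := fun i => if ev i = 0 then 0 else (ev i)⁻¹ with hg
  set B : Matrix (Fin m) (Fin m) ℝ := U * diagonal g * star U with hB
  have hAB : A * B = U * diagonal (fun i => ev i * g i) * star U := by
    rw [hB]; conv_lhs => rw [hspec]
    rw [key]
  have hBA : B * A = U * diagonal (fun i => g i * ev i) * star U := by
    rw [hB]; conv_lhs => rw [hspec]
    rw [key]
  have hMPB : IsMoorePenroseInv A B := by
    refine ⟨?_, ?_, ?_, ?_⟩
    · rw [hAB]
      conv_lhs => rw [hspec]
      rw [key]
      have hfun : (fun i => (ev i * g i) * ev i) = ev := by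
        funext i
        by_cases h : ev i = 0
        · simp [hg, h]
        · field_simp [hg, h]
          simp [hg, h]
      rw [hfun, ← hspec]
    · rw [hBA, hB, key]
      have hfun : (fun i => (g i * ev i) * g i) = g := by
        funext i
        by_cases h : ev i = 0
        · simp [hg, h]
        · field_simp [hg, h]
          simp [hg, h]
      rw [hfun]
    · rw [hAB]; exact sym _
    · rw [hBA]; exact sym _
  have hAd : Ad = B := mp_unique_aux hMP hMPB
  -- the matrix in diagonal form
  have hAA : A * A = U * diagonal (fun i => ev i * ev i) * star U := by
    conv_lhs => rw [hspec]
    rw [key]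
  have hsmul : α • (A * A) = U * diagonal (fun i => α * (ev i * ev i)) * star U := by
    rw [hAA, ← smul_mul_assoc, ← mul_smul_comm, ← diagonal_smul]
    rfl
  set d : Fin m → ℝ := fun i => ev i * g i - α * (ev i * ev i) with hd
  have hM : A * Ad - α • (A * A) = U * diagonal d * star U := by
    rw [hAd, hAB, hsmul, ← sub_mul, ← mul_sub, ← diagonal_sub]
  -- bound on the diagonal entries
  have hd1 : ∀ i, |d i| < 1 := by
    intro i
    by_cases h : ev i = 0
    · simp [hd, hg, h]
    · have hpos : 0 < ev i := lt_of_le_of_ne (hev0 i) (Ne.symm h)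
      have hdg : ev i * g i = 1 := by
        simp [hg, h]
      have h1 : α * (ev i * ev i) ≤ α * (lmax * lmax) := by
        have hsq : ev i * ev i ≤ lmax * lmax :=
          mul_le_mul (hle i) (hle i) (hev0 i) (le_trans (hev0 i) (hle i))
        exact mul_le_mul_of_nonneg_left hsq hα0.le
      have h2 : α * (lmax * lmax) < 2 := by
        have := (lt_div_iff₀ (by positivity : (0:ℝ) < lmax ^ 2)).mp hα
        nlinarith
      have h3 : 0 < α * (ev i * ev i) := by positivity
      rw [hd]
      simp only [hdg]
      rw [abs_lt]
      constructor <;> nlinarith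
  -- conclude
  have hspecnorm : specNorm (A * Ad - α • (A * A)) = ‖A * Ad - α • (A * A)‖ := rfl
  set c : ℝ := Finset.univ.sup' Finset.univ_nonempty (fun i => |d i|) with hc
  have hc0 : 0 ≤ c :=
    le_trans (abs_nonneg (d (⟨0, hm⟩ : Fin m)))
      (Finset.le_sup' (fun i => |d i|) (Finset.mem_univ (⟨0, hm⟩ : Fin m)))
  have hc1 : c < 1 := (Finset.sup'_lt_iff _).mpr fun i _ => hd1 i
  have hdc : ∀ i, |d i| ≤ c := fun i => Finset.le_sup' (fun i => |d i|) (Finset.mem_univ i)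
  have hnorm : ‖A * Ad - α • (A * A)‖ ≤ c := by
    rw [hM, mul_assoc]
    calc ‖U * (diagonal d * star U)‖ = ‖diagonal d * star U‖ :=
          CStarRing.norm_coe_unitary_mul hA.1.eigenvectorUnitary _
      _ = ‖diagonal d‖ := by
          rw [← Unitary.coe_star]
          exact CStarRing.norm_mul_coe_unitary _ _
      _ ≤ c := diag_l2_norm_le_aux d c hc0 hdc
  rw [hspecnorm]
  exact lt_of_le_of_lt hnorm hc1
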